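/- arXiv:2512.01732 — 2 statements merged into one kernel-verified Lean document; each statement's English description precedes it below -/
import Mathlib

section
/- Let each $f_i: \mathbb{R}^p \to \mathbb{R}$ be $\mu$-strongly convex and $L$-smooth with $f = \frac{1}{n}\sum_i f_i$. Then for any points $x_1, \dots, x_n, \bar{x}, x^* \in \mathbb{R}^p$, $\frac{1}{n}\sum_{i=1}^n \langle \bar{x} - x^*, \nabla f_i(x_i) \rangle \ge f(\bar{x}) - f(x^*) + \frac{\mu}{2n}\sum_{i=1}^n \|x_i - x^*\|^2 - \frac{L}{2n}\sum_{i=1}^n \|x_i - \bar{x}\|^2$. -/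
open Finset
open scoped RealInnerProductSpace

theorem stmt11 (p n : ℕ) (hn : 0 < n)
    (f : Fin n → EuclideanSpace ℝ (Fin p) → ℝ)
    (g : Fin n → EuclideanSpace ℝ (Fin p) → EuclideanSpace ℝ (Fin p))
    (μ L : ℝ) (hμ : 0 < μ) (hL : 0 < L)
    (hgrad : ∀ i x, HasGradientAt (f i) (g i x) x)
    (hsc : ∀ i x y, f i y ≥ f i x + ⟪g i x, y - x⟫ + μ / 2 * ‖y - x‖ ^ 2)
    (hsm : ∀ i x y, f i y ≤ f i x + ⟪g i x, y - x⟫ + L / 2 * ‖y - x‖ ^ 2)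
    (F : EuclideanSpace ℝ (Fin p) → ℝ)
    (hF : F = fun x => (1 / (n : ℝ)) * ∑ i, f i x)
    (x : Fin n → EuclideanSpace ℝ (Fin p))
    (xbar xstar : EuclideanSpace ℝ (Fin p)) :
    (1 / (n : ℝ)) * ∑ i, ⟪xbar - xstar, g i (x i)⟫ ≥
      F xbar - F xstar
      + μ / (2 * n) * ∑ i, ‖x i - xstar‖ ^ 2
      - L / (2 * n) * ∑ i, ‖x i - xbar‖ ^ 2 := by
  have key : ∀ i : Fin n, ⟪xbar - xstar, g i (x i)⟫ ≥
      f i xbar - f i xstar + μ / 2 * ‖x i - xstar‖ ^ 2 - L / 2 * ‖x i - xbar‖ ^ 2 := by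
    intro i
    have h1 := hsm i (x i) xbar
    have h2 := hsc i (x i) xstar
    have e : ⟪xbar - xstar, g i (x i)⟫ =
        ⟪g i (x i), xbar - x i⟫ - ⟪g i (x i), xstar - x i⟫ := by
      rw [real_inner_comm]
      rw [← inner_sub_right]
      congr 1
      abel
    have e2 : ‖xbar - x i‖ = ‖x i - xbar‖ := by rw [norm_sub_rev]
    have e3 : ‖xstar - x i‖ = ‖x i - xstar‖ := by rw [norm_sub_rev]
    rw [e]
    rw [e2] at h1; rw [e3] at h2
    linarith
  have hsum : ∑ i, ⟪xbar - xstar, g i (x i)⟫ ≥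
      ∑ i, (f i xbar - f i xstar + μ / 2 * ‖x i - xstar‖ ^ 2 - L / 2 * ‖x i - xbar‖ ^ 2) :=
    Finset.sum_le_sum fun i _ => key i
  have hn' : (0:ℝ) < (n:ℝ) := by exact_mod_cast hn
  have expand : ∑ i, (f i xbar - f i xstar + μ / 2 * ‖x i - xstar‖ ^ 2 - L / 2 * ‖x i - xbar‖ ^ 2)
      = (∑ i, f i xbar) - (∑ i, f i xstar) + μ / 2 * ∑ i, ‖x i - xstar‖ ^ 2
        - L / 2 * ∑ i, ‖x i - xbar‖ ^ 2 := by
    simp [Finset.sum_add_distrib, Finset.sum_sub_distrib, Finset.mul_sum]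
  rw [expand] at hsum
  have h0 : (0:ℝ) ≤ 1 / (n:ℝ) := le_of_lt (one_div_pos.mpr hn')
  have h := mul_le_mul_of_nonneg_left hsum h0
  rw [hF]
  simp only []
  ring_nf
  ring_nf at h
  linarith
end

section
/- (Average-tracking property of ST-GT) Under the ST-GT updates with doubly stochastic $W_r$: $Y_{(r+1)\tau} = W_r Z_{r\tau} + G_{(r+1)\tau} - \frac{1}{\tau}\sum_{t=0}^{\tau-1} G_{r\tau+t}$ where $Z_{r\tau} = \frac{1}{\tau}\sum_{t=0}^{\tau-1} Y_{r\tau+t}$ and $Y_{r\tau+t+1} = Y_{r\tau+t} + G_{r\tau+t+1} - G_{r\tau+t}$ for $t \le \tau-2$. If $\frac{\mathbf{1}^{\top}}{n} Z_{r\tau} = \frac{\mathbf{1}^{\top}}{n}\frac{1}{\tau}\sum_{t=0}^{\tau-1} G_{r\tau+t}$, then $\frac{\mathbf{1}^{\top}}{n} Z_{(r+1)\tau} = \frac{\mathbf{1}^{\top}}{n}\frac{1}{\tau}\sum_{t=0}^{\tau-1} G_{(r+1)\tau+t}$, i.e., the row-average of the accumulated tracking variable equals the row-average of the running-average stochastic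 gradients at every round. -/
open Finset Matrix

/-- The row-average `(1/n) 1ᵀ M` of an `n × p` matrix. -/
noncomputable def rowAvg {n p : ℕ} (M : Matrix (Fin n) (Fin p) ℝ) : Fin p → ℝ :=
  (n : ℝ)⁻¹ • ((fun _ => (1:ℝ)) ᵥ* M)

lemma rowAvg_add {n p : ℕ} (A B : Matrix (Fin n) (Fin p) ℝ) :
    rowAvg (A + B) = rowAvg A + rowAvg B := by
  simp [rowAvg, Matrix.vecMul_add, smul_add]

lemma rowAvg_sub {n p : ℕ} (A B : Matrix (Fin n) (Fin p) ℝ) :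
    rowAvg (A - B) = rowAvg A - rowAvg B := by
  simp [rowAvg, Matrix.vecMul_sub, smul_sub]

lemma rowAvg_smul {n p : ℕ} (c : ℝ) (A : Matrix (Fin n) (Fin p) ℝ) :
    rowAvg (c • A) = c • rowAvg A := by
  funext j
  simp [rowAvg, Matrix.vecMul, dotProduct, Finset.mul_sum]
  exact Finset.sum_congr rfl fun i _ => by ring

lemma rowAvg_sum {n p : ℕ} {ι : Type*} (s : Finset ι) (f : ι → Matrix (Fin n) (Fin p) ℝ) :
    rowAvg (∑ i ∈ s, f i) = ∑ i ∈ s, rowAvg (f i) := by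
  funext j
  simp only [rowAvg, Matrix.vecMul, dotProduct, Pi.smul_apply, Finset.sum_apply,
    Matrix.sum_apply, Finset.mul_sum, smul_eq_mul]
  rw [Finset.sum_comm]

theorem stmt14 (n p : ℕ) (τ : ℕ) (hτ : 1 ≤ τ) (r : ℕ)
    (W : Matrix (Fin n) (Fin n) ℝ)
    (hrow : W *ᵥ (fun _ => (1:ℝ)) = fun _ => (1:ℝ))
    (hcol : (fun _ => (1:ℝ)) ᵥ* W = fun _ => (1:ℝ))
    (Y G : ℕ → Matrix (Fin n) (Fin p) ℝ)
    (Z1 Z2 : Matrix (Fin n) (Fin p) ℝ)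
    (hZ1 : Z1 = (τ : ℝ)⁻¹ • ∑ t ∈ range τ, Y (r * τ + t))
    (hYcomm : Y ((r + 1) * τ) =
      W * Z1 + G ((r + 1) * τ) - (τ : ℝ)⁻¹ • ∑ t ∈ range τ, G (r * τ + t))
    (hYloc : ∀ t, t + 1 ≤ τ - 1 →
      Y ((r + 1) * τ + t + 1) =
        Y ((r + 1) * τ + t) + G ((r + 1) * τ + t + 1) - G ((r + 1) * τ + t))
    (hZ2 : Z2 = (τ : ℝ)⁻¹ • ∑ t ∈ range τ, Y ((r + 1) * τ + t))
    (hinv : rowAvg Z1 = rowAvg ((τ : ℝ)⁻¹ • ∑ t ∈ range τ, G (r * τ + t))) :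
    rowAvg Z2 = rowAvg ((τ : ℝ)⁻¹ • ∑ t ∈ range τ, G ((r + 1) * τ + t)) := by
  -- Y at local steps
  have hY : ∀ t, t ≤ τ - 1 →
      Y ((r + 1) * τ + t) = Y ((r + 1) * τ) + G ((r + 1) * τ + t) - G ((r + 1) * τ) := by
    intro t ht
    induction t with
    | zero => simp
    | succ k ih =>
      have hk : k ≤ τ - 1 := Nat.le_of_succ_le ht
      rw [show (r+1) * τ + (k+1) = (r+1)*τ + k + 1 by ring, hYloc k ht, ih hk]
      abel
  -- rowAvg of W * Z1 = rowAvg Z1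
  have hWZ : rowAvg (W * Z1) = rowAvg Z1 := by
    simp [rowAvg, ← Matrix.vecMul_vecMul, hcol]
  have hY0 : rowAvg (Y ((r + 1) * τ)) =
      rowAvg (G ((r + 1) * τ)) := by
    rw [hYcomm, rowAvg_sub, rowAvg_add, hWZ, hinv]
    abel
  rw [hZ2, rowAvg_smul, rowAvg_sum]
  rw [rowAvg_smul, rowAvg_sum]
  have hsum : ∀ t ∈ range τ, rowAvg (Y ((r+1)*τ + t)) =
      rowAvg (Y ((r+1)*τ)) + rowAvg (G ((r+1)*τ + t)) - rowAvg (G ((r+1)*τ)) := by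
    intro t ht
    have : t ≤ τ - 1 := Nat.le_sub_one_of_lt (Finset.mem_range.mp ht)
    rw [hY t this, rowAvg_sub, rowAvg_add]
  rw [Finset.sum_congr rfl hsum]
  simp only [Finset.sum_sub_distrib, Finset.sum_add_distrib, Finset.sum_const, Finset.card_range]
  rw [hY0, add_sub_cancel_left]
end
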